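/- If W is an irreducible nonnegative square matrix, then there exists an eigenvector p with all entries strictly positive associated to the spectral radius λ₁ of W. -/

import Mathlib

open Matrix

/-- `W` is irreducible: the directed graph with an edge `j → i` whenever `W i j > 0`
is strongly connected, i.e. every ordered pair of vertices is joined by a directed path,
equivalently some power of `W` has a positive `(i, j)` entry. -/
def MatrixIrreducible {n : ℕ} (W : Matrix (Fin n) (Fin n) ℝ) : Prop :=
  ∀ i j : Fin n, ∃ k : ℕ, 0 < k ∧ 0 < (W ^ k) i j

/-- `μ : ℂ` is an eigenvalue of the real matrix `W` (viewed over `ℂ`). -/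
def IsEigOf {n : ℕ} (W : Matrix (Fin n) (Fin n) ℝ) (μ : ℂ) : Prop :=
  Module.End.HasEigenvalue (Matrix.toLin' (W.map (Complex.ofReal))) μ

/-- The spectral radius of `W` : the supremum of the absolute values of its eigenvalues. -/
noncomputable def specRad {n : ℕ} (W : Matrix (Fin n) (Fin n) ℝ) : ℝ :=
  sSup {r : ℝ | ∃ μ : ℂ, IsEigOf W μ ∧ r = ‖μ‖}

set_option maxHeartbeats 2000000

section Aux

variable {n : ℕ}

lemma pf_mulVec_apply (W : Matrix (Fin n) (Fin n) ℝ) (x : Fin n → ℝ) (i : Fin n) :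
    W.mulVec x i = ∑ j, W i j * x j := rfl

lemma pf_sum_mulVec (s : Finset ℕ) (A : ℕ → Matrix (Fin n) (Fin n) ℝ) (x : Fin n → ℝ) :
    (∑ k ∈ s, A k).mulVec x = ∑ k ∈ s, (A k).mulVec x := by
  funext i
  simp only [pf_mulVec_apply, Matrix.sum_apply, Finset.sum_apply, Finset.sum_mul]
  rw [Finset.sum_comm]

lemma pf_pow_nonneg {W : Matrix (Fin n) (Fin n) ℝ} (hW : ∀ i j, 0 ≤ W i j) :
    ∀ (k : ℕ) (i j : Fin n), 0 ≤ (W ^ k) i j := by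
  intro k
  induction k with
  | zero =>
    intro i j
    simp only [pow_zero, Matrix.one_apply]
    split <;> norm_num
  | succ k ih =>
    intro i j
    rw [pow_succ, Matrix.mul_apply]
    exact Finset.sum_nonneg fun l _ => mul_nonneg (ih i l) (hW l j)

/-- If `x` is a probability vector and `ρ • x ≤ W x` entrywise, then
`ρ ≤ ∑ᵢⱼ W i j`. -/
lemma pf_rho_le_M {W : Matrix (Fin n) (Fin n) ℝ} (hW : ∀ i j, 0 ≤ W i j)
    {x : Fin n → ℝ} (hx0 : ∀ i, 0 ≤ x i) (hx1 : ∑ i, x i = 1)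
    {ρ : ℝ} (h : ∀ i, ρ * x i ≤ W.mulVec x i) :
    ρ ≤ ∑ i, ∑ j, W i j := by
  have hxle1 : ∀ j, x j ≤ 1 := by
    intro j
    calc x j ≤ ∑ i, x i := Finset.single_le_sum (fun i _ => hx0 i) (Finset.mem_univ j)
    _ = 1 := hx1
  calc ρ = ∑ i, ρ * x i := by rw [← Finset.mul_sum, hx1, mul_one]
  _ ≤ ∑ i, W.mulVec x i := Finset.sum_le_sum fun i _ => h i
  _ = ∑ i, ∑ j, W i j * x j := rfl
  _ ≤ ∑ i, ∑ j, W i j := by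
      refine Finset.sum_le_sum fun i _ => Finset.sum_le_sum fun j _ => ?_
      calc W i j * x j ≤ W i j * 1 := mul_le_mul_of_nonneg_left (hxle1 j) (hW i j)
      _ = W i j := mul_one _

/-- A matrix with strictly positive entries sends nonnegative nonzero vectors to
strictly positive vectors. -/
lemma pf_pos_mulVec {B : Matrix (Fin n) (Fin n) ℝ} (hB : ∀ i j, 0 < B i j)
    {x : Fin n → ℝ} (hx0 : ∀ i, 0 ≤ x i) (hx : x ≠ 0) (i : Fin n) :
    0 < B.mulVec x i := by
  obtain ⟨j, hj⟩ : ∃ j, 0 < x j := by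
    by_contra h
    push_neg at h
    exact hx (funext fun j => le_antisymm (h j) (hx0 j))
  rw [pf_mulVec_apply]
  have : ∀ l ∈ Finset.univ, 0 ≤ B i l * x l :=
    fun l _ => mul_nonneg (hB i l).le (hx0 l)
  calc (0:ℝ) < B i j * x j := mul_pos (hB i j) hj
  _ ≤ ∑ l, B i l * x l := Finset.single_le_sum this (Finset.mem_univ j)

end Aux

/-- **Perron–Frobenius (part 3).** If `W` is an irreducible nonnegative square matrix
(`n ≥ 1`), then there exists an eigenvector `p` with all entries strictly positive
associated to the spectral radius `λ₁` of `W`. -/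
theorem perron_frobenius_exists_positive_eigenvector
    {n : ℕ} (hn : 1 ≤ n) (W : Matrix (Fin n) (Fin n) ℝ)
    (hnonneg : ∀ i j, 0 ≤ W i j) (hirr : MatrixIrreducible W) :
    ∃ p : Fin n → ℝ, (∀ i, 0 < p i) ∧ W.mulVec p = specRad W • p := by
  haveI : Nonempty (Fin n) := ⟨⟨0, hn⟩⟩
  set M : ℝ := ∑ i, ∑ j, W i j with hM
  -- The compact feasibility set
  set K : Set (ℝ × (Fin n → ℝ)) :=
    {p | (0 ≤ p.1 ∧ p.1 ≤ M) ∧ (∀ i, 0 ≤ p.2 i) ∧ (∑ i, p.2 i = 1) ∧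
      ∀ i, p.1 * p.2 i ≤ W.mulVec p.2 i} with hK
  have hMnonneg : 0 ≤ M :=
    Finset.sum_nonneg fun i _ => Finset.sum_nonneg fun j _ => hnonneg i j
  -- continuity of the entries of mulVec
  have hcont : ∀ i : Fin n, Continuous fun p : ℝ × (Fin n → ℝ) => W.mulVec p.2 i := by
    intro i
    simp only [pf_mulVec_apply]
    exact continuous_finset_sum _ fun j _ =>
      continuous_const.mul ((continuous_apply j).comp continuous_snd)
  have hKclosed : IsClosed K := by
    have h1 : IsClosed {p : ℝ × (Fin n → ℝ) | 0 ≤ p.1 ∧ p.1 ≤ M} :=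
      (isClosed_le continuous_const continuous_fst).inter
        (isClosed_le continuous_fst continuous_const)
    have h2 : IsClosed {p : ℝ × (Fin n → ℝ) | ∀ i, 0 ≤ p.2 i} := by
      rw [Set.setOf_forall]
      exact isClosed_iInter fun i =>
        isClosed_le continuous_const ((continuous_apply i).comp continuous_snd)
    have h3 : IsClosed {p : ℝ × (Fin n → ℝ) | ∑ i, p.2 i = 1} :=
      isClosed_eq (continuous_finset_sum _ fun i _ =>
        (continuous_apply i).comp continuous_snd) continuous_const
    have h4 : IsClosed {p : ℝ × (Fin n → ℝ) | ∀ i, p.1 * p.2 i ≤ W.mulVec p.2 i} := by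
      rw [Set.setOf_forall]
      exact isClosed_iInter fun i =>
        isClosed_le (continuous_fst.mul ((continuous_apply i).comp continuous_snd)) (hcont i)
    have : K = {p : ℝ × (Fin n → ℝ) | 0 ≤ p.1 ∧ p.1 ≤ M} ∩
        ({p | ∀ i, 0 ≤ p.2 i} ∩ ({p | ∑ i, p.2 i = 1} ∩
          {p | ∀ i, p.1 * p.2 i ≤ W.mulVec p.2 i})) := by
      ext p; simp [hK, Set.mem_setOf_eq, and_assoc]
    rw [this]
    exact h1.inter (h2.inter (h3.inter h4))
  have hKcompact : IsCompact K := by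
    refine IsCompact.of_isClosed_subset
      ((isCompact_Icc (a := (0:ℝ)) (b := M)).prod
        (isCompact_univ_pi fun _ : Fin n => isCompact_Icc (a := (0:ℝ)) (b := 1)))
      hKclosed ?_
    rintro ⟨ρ, x⟩ ⟨⟨h0, hm⟩, hx0, hx1, -⟩
    refine ⟨⟨h0, hm⟩, fun i _ => ⟨hx0 i, ?_⟩⟩
    calc x i ≤ ∑ j, x j := Finset.single_le_sum (fun j _ => hx0 j) (Finset.mem_univ i)
    _ = 1 := hx1
  have hKne : K.Nonempty := by
    refine ⟨(0, fun _ => (n : ℝ)⁻¹), ⟨le_refl _, hMnonneg⟩, fun i => by positivity, ?_, ?_⟩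
    · simp only [Finset.sum_const, Finset.card_univ, Fintype.card_fin, nsmul_eq_mul]
      field_simp
    · intro i
      rw [zero_mul, pf_mulVec_apply]
      exact Finset.sum_nonneg fun j _ => mul_nonneg (hnonneg i j) (by positivity)
  obtain ⟨⟨r, x⟩, hrxK, hmax⟩ := hKcompact.exists_isMaxOn hKne continuous_fst.continuousOn
  obtain ⟨⟨hr0, hrM⟩, hx0, hx1, hrx⟩ := hrxK
  have hmax' : ∀ q ∈ K, q.1 ≤ r := fun q hq => hmax hq
  have hxne : x ≠ 0 := by
    intro h
    rw [h] at hx1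
    simp only [Pi.zero_apply, Finset.sum_const_zero] at hx1
    exact one_ne_zero hx1.symm
  -- the positive auxiliary matrix B
  set Kb : ℕ := Finset.univ.sup (fun p : Fin n × Fin n => (hirr p.1 p.2).choose) with hKb
  set B : Matrix (Fin n) (Fin n) ℝ := ∑ k ∈ Finset.range (Kb + 1), W ^ k with hB
  have hBpos : ∀ i j, 0 < B i j := by
    intro i j
    obtain ⟨hk, hpos⟩ := (hirr i j).choose_spec
    have hle : (hirr i j).choose ≤ Kb :=
      Finset.le_sup (f := fun p : Fin n × Fin n => (hirr p.1 p.2).choose)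
        (Finset.mem_univ (i, j))
    have hmem : (hirr i j).choose ∈ Finset.range (Kb + 1) :=
      Finset.mem_range.mpr (Nat.lt_succ_of_le hle)
    have : (W ^ (hirr i j).choose) i j ≤ B i j := by
      rw [hB]
      simp only [Matrix.sum_apply]
      exact Finset.single_le_sum (f := fun k => (W ^ k) i j)
        (fun k _ => pf_pow_nonneg hnonneg k i j) hmem
    exact lt_of_lt_of_le hpos this
  have hBW : B * W = W * B := by
    rw [hB, Finset.sum_mul, Finset.mul_sum]
    refine Finset.sum_congr rfl fun k _ => ?_
    rw [← pow_succ, ← pow_succ']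
  -- Step 1: W x = r x
  have heig : W.mulVec x = r • x := by
    by_contra hne
    set z : Fin n → ℝ := W.mulVec x - r • x with hz
    have hz0 : ∀ i, 0 ≤ z i := fun i => sub_nonneg.mpr (hrx i)
    have hzne : z ≠ 0 := fun h => hne (by rwa [hz, sub_eq_zero] at h)
    set y : Fin n → ℝ := B.mulVec x with hy
    have hypos : ∀ i, 0 < y i := fun i => pf_pos_mulVec hBpos hx0 hxne i
    have hBz : ∀ i, 0 < B.mulVec z i := fun i => pf_pos_mulVec hBpos hz0 hzne i
    have hWy : W.mulVec y - r • y = B.mulVec z := by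
      rw [hy, hz, Matrix.mulVec_mulVec, ← hBW, ← Matrix.mulVec_mulVec,
        Matrix.mulVec_sub, Matrix.mulVec_smul]
    set ε : ℝ := Finset.univ.inf' Finset.univ_nonempty
      (fun i => B.mulVec z i / y i) with hε
    have hεpos : 0 < ε := by
      rw [hε, Finset.lt_inf'_iff]
      exact fun i _ => div_pos (hBz i) (hypos i)
    have hbump : ∀ i, (r + ε) * y i ≤ W.mulVec y i := by
      intro i
      have h1 : ε ≤ B.mulVec z i / y i :=
        Finset.inf'_le _ (Finset.mem_univ i)
      have h2 : ε * y i ≤ B.mulVec z i := by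
        rw [← div_mul_cancel₀ (B.mulVec z i) (hypos i).ne']
        exact mul_le_mul_of_nonneg_right h1 (hypos i).le
      have h3 : W.mulVec y i = r * y i + B.mulVec z i := by
        have := congrFun hWy i
        simp only [Pi.sub_apply, Pi.smul_apply, smul_eq_mul] at this
        linarith
      rw [h3]; nlinarith
    set s : ℝ := ∑ i, y i with hs
    have hspos : 0 < s := Finset.sum_pos (fun i _ => hypos i) Finset.univ_nonempty
    set y' : Fin n → ℝ := s⁻¹ • y with hy'
    have hy'0 : ∀ i, 0 ≤ y' i := fun i => by
      simp only [hy', Pi.smul_apply, smul_eq_mul]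
      exact mul_nonneg (inv_nonneg.mpr hspos.le) (hypos i).le
    have hy'1 : ∑ i, y' i = 1 := by
      simp only [hy', Pi.smul_apply, smul_eq_mul, ← Finset.mul_sum, ← hs]
      field_simp
    have hy'rx : ∀ i, (r + ε) * y' i ≤ W.mulVec y' i := by
      intro i
      have : W.mulVec y' i = s⁻¹ * W.mulVec y i := by
        rw [hy', Matrix.mulVec_smul]
        simp
      rw [this]
      simp only [hy', Pi.smul_apply, smul_eq_mul]
      have := hbump i
      have hsi : 0 ≤ s⁻¹ := inv_nonneg.mpr hspos.le
      calc (r + ε) * (s⁻¹ * y i) = s⁻¹ * ((r + ε) * y i) := by ring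
      _ ≤ s⁻¹ * W.mulVec y i := mul_le_mul_of_nonneg_left this hsi
    have hmem : (r + ε, y') ∈ K := by
      refine ⟨⟨add_nonneg hr0 hεpos.le, ?_⟩, hy'0, hy'1, hy'rx⟩
      exact pf_rho_le_M hnonneg hy'0 hy'1 hy'rx
    have hcontra : r + ε ≤ r := hmax' _ hmem
    linarith
  -- Step 2: x is strictly positive
  have hxpos : ∀ i, 0 < x i := by
    have hpowx : ∀ k : ℕ, (W ^ k).mulVec x = r ^ k • x := by
      intro k
      induction k with
      | zero => simp
      | succ k ih =>
        rw [pow_succ, ← Matrix.mulVec_mulVec, heig, Matrix.mulVec_smul, ih,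
          smul_smul, pow_succ]
        ring_nf
    have hBx : B.mulVec x = (∑ k ∈ Finset.range (Kb + 1), r ^ k) • x := by
      rw [hB, pf_sum_mulVec]
      rw [Finset.sum_smul]
      exact Finset.sum_congr rfl fun k _ => hpowx k
    have hc : (0:ℝ) < ∑ k ∈ Finset.range (Kb + 1), r ^ k := by
      have h1 : (1:ℝ) ≤ ∑ k ∈ Finset.range (Kb + 1), r ^ k := by
        have : (1:ℝ) = r ^ 0 := by simp
        rw [this]
        exact Finset.single_le_sum (f := fun k => r ^ k)
          (fun k _ => pow_nonneg hr0 k) (Finset.mem_range.mpr (Nat.succ_pos _))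
      linarith
    intro i
    have hBxi : 0 < B.mulVec x i := pf_pos_mulVec hBpos hx0 hxne i
    rw [hBx] at hBxi
    simp only [Pi.smul_apply, smul_eq_mul] at hBxi
    nlinarith [mul_pos_iff.mp hBxi]
  -- Step 3: r is an eigenvalue of the complexified matrix
  have hreig : IsEigOf W (r : ℂ) := by
    set v : Fin n → ℂ := fun i => (x i : ℂ) with hv
    have hvne : v ≠ 0 := by
      intro h
      have := congrFun h ⟨0, hn⟩
      simp only [hv, Pi.zero_apply, Complex.ofReal_eq_zero] at this
      exact (hxpos ⟨0, hn⟩).ne' this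
    have hmv : (W.map (Complex.ofReal)).mulVec v = (r : ℂ) • v := by
      funext i
      have := congrFun heig i
      simp only [Pi.smul_apply, smul_eq_mul] at this
      simp only [pf_mulVec_apply, Matrix.map_apply, hv, Pi.smul_apply, smul_eq_mul]
      rw [← Complex.ofReal_mul, ← this, pf_mulVec_apply]
      push_cast
      rfl
    exact Module.End.hasEigenvalue_of_hasEigenvector
      ⟨Module.End.mem_eigenspace_iff.mpr (by rw [Matrix.toLin'_apply, hmv]), hvne⟩
  -- Step 4: every eigenvalue has modulus at most r
  have hbound : ∀ μ : ℂ, IsEigOf W μ → ‖μ‖ ≤ r := by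
    intro μ hμ
    obtain ⟨v, hv⟩ := hμ.exists_hasEigenvector
    have hvmv : (W.map (Complex.ofReal)).mulVec v = μ • v := by
      have := Module.End.mem_eigenspace_iff.mp hv.1
      rwa [Matrix.toLin'_apply] at this
    set u : Fin n → ℝ := fun i => ‖v i‖ with hu
    have hu0 : ∀ i, 0 ≤ u i := fun i => norm_nonneg _
    have hune : u ≠ 0 := by
      intro h
      apply hv.2
      funext i
      have := congrFun h i
      simp only [hu, Pi.zero_apply, norm_eq_zero] at this
      simpa using this
    have hkey : ∀ i, ‖μ‖ * u i ≤ W.mulVec u i := by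
      intro i
      have h1 : ‖μ‖ * u i = ‖(W.map Complex.ofReal).mulVec v i‖ := by
        rw [hvmv]
        simp only [Pi.smul_apply, smul_eq_mul, norm_mul, hu]
      rw [h1, pf_mulVec_apply]
      calc ‖∑ j, (W.map Complex.ofReal) i j * v j‖
          ≤ ∑ j, ‖(W.map Complex.ofReal) i j * v j‖ :=
            norm_sum_le _ _
      _ = ∑ j, W i j * u j := by
          refine Finset.sum_congr rfl fun j _ => ?_
          simp only [Matrix.map_apply, norm_mul, Complex.norm_real, Real.norm_eq_abs, hu,
            abs_of_nonneg (hnonneg i j)]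
      _ = W.mulVec u i := (pf_mulVec_apply W u i).symm
    set s : ℝ := ∑ i, u i with hs
    have hspos : 0 < s := by
      obtain ⟨j, hj⟩ : ∃ j, 0 < u j := by
        by_contra h
        push_neg at h
        exact hune (funext fun j => le_antisymm (h j) (hu0 j))
      calc (0:ℝ) < u j := hj
      _ ≤ s := Finset.single_le_sum (fun i _ => hu0 i) (Finset.mem_univ j)
    set u' : Fin n → ℝ := s⁻¹ • u with hu'
    have hu'0 : ∀ i, 0 ≤ u' i := fun i => by
      simp only [hu', Pi.smul_apply, smul_eq_mul]
      exact mul_nonneg (inv_nonneg.mpr hspos.le) (hu0 i)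
    have hu'1 : ∑ i, u' i = 1 := by
      simp only [hu', Pi.smul_apply, smul_eq_mul, ← Finset.mul_sum, ← hs]
      field_simp
    have hu'key : ∀ i, ‖μ‖ * u' i ≤ W.mulVec u' i := by
      intro i
      have : W.mulVec u' i = s⁻¹ * W.mulVec u i := by
        rw [hu', Matrix.mulVec_smul]; simp
      rw [this]
      simp only [hu', Pi.smul_apply, smul_eq_mul]
      have hsi : 0 ≤ s⁻¹ := inv_nonneg.mpr hspos.le
      calc ‖μ‖ * (s⁻¹ * u i) = s⁻¹ * (‖μ‖ * u i) := by ring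
      _ ≤ s⁻¹ * W.mulVec u i := mul_le_mul_of_nonneg_left (hkey i) hsi
    have hmem : (‖μ‖, u') ∈ K := by
      refine ⟨⟨norm_nonneg _, ?_⟩, hu'0, hu'1, hu'key⟩
      exact pf_rho_le_M hnonneg hu'0 hu'1 hu'key
    exact hmax' _ hmem
  -- Step 5: specRad W = r
  have hspec : specRad W = r := by
    have hrmem : r ∈ {t : ℝ | ∃ μ : ℂ, IsEigOf W μ ∧ t = ‖μ‖} :=
      ⟨(r : ℂ), hreig, by rw [Complex.norm_real, Real.norm_eq_abs, abs_of_nonneg hr0]⟩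
    have hbdd : ∀ t ∈ {t : ℝ | ∃ μ : ℂ, IsEigOf W μ ∧ t = ‖μ‖}, t ≤ r := by
      rintro t ⟨μ, hμ, rfl⟩
      exact hbound μ hμ
    exact le_antisymm (csSup_le ⟨r, hrmem⟩ hbdd) (le_csSup ⟨r, hbdd⟩ hrmem)
  exact ⟨x, hxpos, by rw [hspec, heig]⟩
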